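/- For x ∈ [1/3, 1) and any graph G with non-loop edge e: 1 ≤ Z_flow(G/e; q, x) / Z_flow(G; q, x) ≤ 1/x ≤ 3. -/

import Mathlib

open Finset

noncomputable section

attribute [local instance] Classical.propDecidable

/-- A finite multigraph with a fixed orientation: each edge has a source and a target. -/
structure Multigraph (V E : Type) where
  src : E → V
  tgt : E → V

namespace Multigraph

variable {V E : Type} [Fintype V] [Fintype E] [DecidableEq V] [DecidableEq E]

/-- A `ℤ_q`-flow: conservation at every vertex. -/
def IsFlow (G : Multigraph V E) (q : ℕ) (f : E → ZMod q) : Prop :=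
  ∀ v : V, ∑ e ∈ univ.filter (fun e => G.tgt e = v), f e =
           ∑ e ∈ univ.filter (fun e => G.src e = v), f e

/-- A `ℤ`-flow: conservation at every vertex. -/
def IsZFlow (G : Multigraph V E) (f : E → ℤ) : Prop :=
  ∀ v : V, ∑ e ∈ univ.filter (fun e => G.tgt e = v), f e =
           ∑ e ∈ univ.filter (fun e => G.src e = v), f e

/-- The support of a flow: the set of edges with nonzero value. -/
def flowSupport {q : ℕ} (f : E → ZMod q) : Finset E :=
  univ.filter (fun e => f e ≠ 0)

/-- Flow partition function (complex variable). -/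
def Zflow (G : Multigraph V E) (q : ℕ) [NeZero q] (x : ℂ) : ℂ :=
  ∑ f ∈ univ.filter (fun f : E → ZMod q => G.IsFlow q f), x ^ (flowSupport f).card

/-- Flow partition function (real variable). -/
def ZflowR (G : Multigraph V E) (q : ℕ) [NeZero q] (x : ℝ) : ℝ :=
  ∑ f ∈ univ.filter (fun f : E → ZMod q => G.IsFlow q f), x ^ (flowSupport f).card

/-- Potts partition function: sum over colourings of `w ^ (number of monochromatic edges)`. -/
def ZPotts (G : Multigraph V E) (q : ℕ) (w : ℂ) : ℂ :=
  ∑ σ : V → Fin q, w ^ (univ.filter (fun e => σ (G.src e) = σ (G.tgt e))).card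

/-- The simple graph on `V` induced by the edges in `F` (loops/multiplicities dropped;
this does not change connected components). -/
def compRel (G : Multigraph V E) (F : Finset E) : SimpleGraph V :=
  SimpleGraph.fromRel (fun v w => ∃ e ∈ F, G.src e = v ∧ G.tgt e = w)

/-- Number of connected components of the spanning subgraph `(V, F)`. -/
def compCount (G : Multigraph V E) (F : Finset E) : ℕ :=
  Nat.card (G.compRel F).ConnectedComponent

/-- Random cluster partition function. -/
def ZRC (G : Multigraph V E) (q : ℕ) (y : ℂ) : ℂ :=
  ∑ F : Finset E, (q : ℂ) ^ (G.compCount F) * y ^ F.card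

/-- The spanning subgraph `(V, A)`. -/
def edgeSubgraph (G : Multigraph V E) (A : Finset E) : Multigraph V {e : E // e ∈ A} :=
  ⟨fun e => G.src e.1, fun e => G.tgt e.1⟩

/-- Deletion of the edge `e`. -/
def deleteEdge (G : Multigraph V E) (e : E) : Multigraph V {e' : E // e' ≠ e} :=
  ⟨fun e' => G.src e'.1, fun e' => G.tgt e'.1⟩

/-- Contraction of the edge `e`: the edge `e` is removed and every endpoint equal to
`G.tgt e` is redirected to `G.src e`, merging the two endpoints of `e`. -/
def contractEdge (G : Multigraph V E) (e : E) : Multigraph V {e' : E // e' ≠ e} :=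
  ⟨fun e' => if G.src e'.1 = G.tgt e then G.src e else G.src e'.1,
   fun e' => if G.tgt e'.1 = G.tgt e then G.src e else G.tgt e'.1⟩

end Multigraph

/-- The `(L+1) × (L+1)` grid graph, with horizontal and vertical edges oriented
in the positive direction. -/
def gridGraph (L : ℕ) :
    Multigraph (Fin (L+1) × Fin (L+1)) ((Fin L × Fin (L+1)) ⊕ (Fin (L+1) × Fin L)) :=
  ⟨Sum.elim (fun p => (p.1.castSucc, p.2)) (fun p => (p.1, p.2.castSucc)),
   Sum.elim (fun p => (p.1.succ, p.2)) (fun p => (p.1, p.2.succ))⟩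

namespace ContractionAux

open Multigraph

variable {V E : Type} [Fintype V] [Fintype E] [DecidableEq V] [DecidableEq E]

/-- Restriction of a function on `E` to edges other than `e`. -/
def restr {q : ℕ} (e : E) (f : E → ZMod q) : {e' : E // e' ≠ e} → ZMod q :=
  fun e' => f e'.1

/-- Extension of a function on `E \ {e}` by the value `c` at `e`. -/
def ext {q : ℕ} (e : E) (g : {e' : E // e' ≠ e} → ZMod q) (c : ZMod q) : E → ZMod q :=
  fun x => if h : x = e then c else g ⟨x, h⟩

lemma restr_ext {q : ℕ} (e : E) (g : {e' : E // e' ≠ e} → ZMod q) (c : ZMod q) :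
    restr e (ext e g c) = g := by
  funext e'
  simp [restr, ext, e'.2]

lemma ext_apply_self {q : ℕ} (e : E) (g : {e' : E // e' ≠ e} → ZMod q) (c : ZMod q) :
    ext e g c e = c := by simp [ext]

lemma ext_apply_ne {q : ℕ} (e : E) (g : {e' : E // e' ≠ e} → ZMod q) (c : ZMod q)
    (x : E) (hx : x ≠ e) : ext e g c x = g ⟨x, hx⟩ := by simp [ext, hx]

lemma ext_restr {q : ℕ} (e : E) (f : E → ZMod q) :
    ext e (restr e f) (f e) = f := by
  funext x
  by_cases hx : x = e <;> simp [ext, restr, hx]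

/-- Sums over a filtered subtype equal sums over a filtered base type. -/
lemma sum_sub' {M : Type*} [AddCommMonoid M] (e : E) (P : E → Prop) [DecidablePred P]
    (h : E → M) :
    ∑ e' ∈ univ.filter (fun e' : {e' : E // e' ≠ e} => P e'.1), h e'.1
      = ∑ x ∈ univ.filter (fun x => P x ∧ x ≠ e), h x := by
  refine Finset.sum_bij' (fun e' _ => e'.1)
    (fun x hx => ⟨x, (Finset.mem_filter.1 hx).2.2⟩) ?_ ?_ ?_ ?_ ?_
  · intro a ha
    simp only [Finset.mem_filter, Finset.mem_univ, true_and] at ha ⊢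
    exact ⟨ha, a.2⟩
  all_goals simp +contextual

/-- Splitting off the edge `e` from a filtered sum. -/
lemma sum_split {M : Type*} [AddCommMonoid M] (e : E) (P : E → Prop) [DecidablePred P]
    (f : E → M) :
    ∑ x ∈ univ.filter P, f x
      = (∑ x ∈ univ.filter (fun x => P x ∧ x ≠ e), f x) + if P e then f e else 0 := by
  rw [← Finset.sum_filter_add_sum_filter_not (univ.filter P) (· ≠ e)]
  congr 1
  · rw [Finset.filter_filter]
  · have h1 : (univ.filter P).filter (fun x => ¬ x ≠ e)
        = if P e then {e} else ∅ := by
      ext x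
      by_cases hx : x = e <;> by_cases hPe : P e <;>
        simp_all
    rw [h1]
    split_ifs with h <;> simp

variable (G : Multigraph V E)

/-- Excess of `f` at `v` in `G`. -/
def exG {q : ℕ} (f : E → ZMod q) (v : V) : ZMod q :=
  (∑ x ∈ univ.filter (fun x => G.tgt x = v), f x)
    - ∑ x ∈ univ.filter (fun x => G.src x = v), f x

/-- Excess of `f` at `v` in `G` with the edge `e` removed. -/
def exD {q : ℕ} (e : E) (f : E → ZMod q) (v : V) : ZMod q :=
  (∑ x ∈ univ.filter (fun x => G.tgt x = v ∧ x ≠ e), f x)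
    - ∑ x ∈ univ.filter (fun x => G.src x = v ∧ x ≠ e), f x

/-- The forced value of `f e` given the rest of the flow. -/
def cE {q : ℕ} (e : E) (f : E → ZMod q) : ZMod q :=
  (∑ x ∈ univ.filter (fun x => G.src x = G.tgt e ∧ x ≠ e), f x)
    - ∑ x ∈ univ.filter (fun x => G.tgt x = G.tgt e ∧ x ≠ e), f x

lemma cE_eq_neg_exD {q : ℕ} (e : E) (f : E → ZMod q) :
    cE G e f = - exD G e f (G.tgt e) := by
  simp [cE, exD, neg_sub]

lemma cE_congr {q : ℕ} (e : E) (f f' : E → ZMod q)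
    (h : ∀ x, x ≠ e → f x = f' x) : cE G e f = cE G e f' := by
  unfold cE
  congr 1 <;> refine Finset.sum_congr rfl ?_ <;>
    · intro x hx
      exact h x (Finset.mem_filter.1 hx).2.2

lemma isFlow_iff_exG {q : ℕ} (f : E → ZMod q) :
    G.IsFlow q f ↔ ∀ v, exG G f v = 0 := by
  unfold IsFlow exG
  constructor
  · intro h v; rw [h v, sub_self]
  · intro h v; have := h v; rwa [sub_eq_zero] at this

lemma exG_eq {q : ℕ} (e : E) (f : E → ZMod q) (v : V) :
    exG G f v = exD G e f v + (if G.tgt e = v then f e else 0)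
      - (if G.src e = v then f e else 0) := by
  unfold exG exD
  rw [sum_split e (fun x => G.tgt x = v) f, sum_split e (fun x => G.src x = v) f]
  ring

/-- Excess in the contracted graph, expressed via excesses in `G - e`. -/
lemma exC_eq {q : ℕ} (e : E) (he : G.src e ≠ G.tgt e) (f : E → ZMod q) (v : V) :
    exG (G.contractEdge e) (restr e f) v
      = if v = G.tgt e then 0
        else if v = G.src e then exD G e f (G.src e) + exD G e f (G.tgt e)
        else exD G e f v := by
  unfold exG contractEdge restr
  dsimp only
  rw [sum_sub' e (fun x => (if G.tgt x = G.tgt e then G.src e else G.tgt x) = v) f,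
    sum_sub' e (fun x => (if G.src x = G.tgt e then G.src e else G.src x) = v) f]
  by_cases hvw : v = G.tgt e
  · subst hvw
    rw [if_pos rfl]
    rw [Finset.filter_false_of_mem (s := univ)
        (p := fun x => (if G.tgt x = G.tgt e then G.src e else G.tgt x) = G.tgt e ∧ x ≠ e) ?_,
      Finset.filter_false_of_mem (s := univ)
        (p := fun x => (if G.src x = G.tgt e then G.src e else G.src x) = G.tgt e ∧ x ≠ e) ?_]
    · simp
    · intro x _ hx
      obtain ⟨h1, -⟩ := hx
      split_ifs at h1 with h
      · exact he h1
      · exact h h1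
    · intro x _ hx
      obtain ⟨h1, -⟩ := hx
      split_ifs at h1 with h
      · exact he h1
      · exact h h1
  · by_cases hvu : v = G.src e
    · subst hvu
      rw [if_neg hvw, if_pos rfl]
      have ht : (univ.filter (fun x =>
            (if G.tgt x = G.tgt e then G.src e else G.tgt x) = G.src e ∧ x ≠ e))
          = (univ.filter (fun x => G.tgt x = G.src e ∧ x ≠ e))
            ∪ (univ.filter (fun x => G.tgt x = G.tgt e ∧ x ≠ e)) := by
        ext x
        simp only [Finset.mem_filter, Finset.mem_union, Finset.mem_univ, true_and]
        constructor
        · rintro ⟨h1, h2⟩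
          by_cases h : G.tgt x = G.tgt e
          · exact Or.inr ⟨h, h2⟩
          · rw [if_neg h] at h1; exact Or.inl ⟨h1, h2⟩
        · rintro (⟨h1, h2⟩ | ⟨h1, h2⟩)
          · have : G.tgt x ≠ G.tgt e := by rw [h1]; exact he
            exact ⟨by rw [if_neg this, h1], h2⟩
          · exact ⟨by rw [if_pos h1], h2⟩
      have hs : (univ.filter (fun x =>
            (if G.src x = G.tgt e then G.src e else G.src x) = G.src e ∧ x ≠ e))
          = (univ.filter (fun x => G.src x = G.src e ∧ x ≠ e))
            ∪ (univ.filter (fun x => G.src x = G.tgt e ∧ x ≠ e)) := by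
        ext x
        simp only [Finset.mem_filter, Finset.mem_union, Finset.mem_univ, true_and]
        constructor
        · rintro ⟨h1, h2⟩
          by_cases h : G.src x = G.tgt e
          · exact Or.inr ⟨h, h2⟩
          · rw [if_neg h] at h1; exact Or.inl ⟨h1, h2⟩
        · rintro (⟨h1, h2⟩ | ⟨h1, h2⟩)
          · have : G.src x ≠ G.tgt e := by rw [h1]; exact he
            exact ⟨by rw [if_neg this, h1], h2⟩
          · exact ⟨by rw [if_pos h1], h2⟩
      have hdt : Disjoint (univ.filter (fun x => G.tgt x = G.src e ∧ x ≠ e))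
          (univ.filter (fun x => G.tgt x = G.tgt e ∧ x ≠ e)) := by
        rw [Finset.disjoint_left]
        intro x hx hx'
        simp only [Finset.mem_filter] at hx hx'
        exact he (hx.2.1 ▸ hx'.2.1 ▸ rfl)
      have hds : Disjoint (univ.filter (fun x => G.src x = G.src e ∧ x ≠ e))
          (univ.filter (fun x => G.src x = G.tgt e ∧ x ≠ e)) := by
        rw [Finset.disjoint_left]
        intro x hx hx'
        simp only [Finset.mem_filter] at hx hx'
        exact he (hx.2.1 ▸ hx'.2.1 ▸ rfl)
      rw [ht, hs, Finset.sum_union hdt, Finset.sum_union hds]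
      unfold exD
      ring
    · rw [if_neg hvw, if_neg hvu]
      have ht : (univ.filter (fun x =>
            (if G.tgt x = G.tgt e then G.src e else G.tgt x) = v ∧ x ≠ e))
          = (univ.filter (fun x => G.tgt x = v ∧ x ≠ e)) := by
        ext x
        simp only [Finset.mem_filter, Finset.mem_univ, true_and]
        constructor
        · rintro ⟨h1, h2⟩
          by_cases h : G.tgt x = G.tgt e
          · rw [if_pos h] at h1; exact absurd h1.symm hvu
          · rw [if_neg h] at h1; exact ⟨h1, h2⟩
        · rintro ⟨h1, h2⟩
          have : G.tgt x ≠ G.tgt e := by rw [h1]; exact fun hh => hvw hh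
          exact ⟨by rw [if_neg this, h1], h2⟩
      have hs : (univ.filter (fun x =>
            (if G.src x = G.tgt e then G.src e else G.src x) = v ∧ x ≠ e))
          = (univ.filter (fun x => G.src x = v ∧ x ≠ e)) := by
        ext x
        simp only [Finset.mem_filter, Finset.mem_univ, true_and]
        constructor
        · rintro ⟨h1, h2⟩
          by_cases h : G.src x = G.tgt e
          · rw [if_pos h] at h1; exact absurd h1.symm hvu
          · rw [if_neg h] at h1; exact ⟨h1, h2⟩
        · rintro ⟨h1, h2⟩
          have : G.src x ≠ G.tgt e := by rw [h1]; exact fun hh => hvw hh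
          exact ⟨by rw [if_neg this, h1], h2⟩
      rw [ht, hs]
      rfl

lemma flow_iff {q : ℕ} (e : E) (he : G.src e ≠ G.tgt e) (f : E → ZMod q) :
    G.IsFlow q f ↔ (G.contractEdge e).IsFlow q (restr e f) ∧ f e = cE G e f := by
  rw [isFlow_iff_exG, isFlow_iff_exG]
  constructor
  · intro h
    have hw := h (G.tgt e)
    rw [exG_eq G e, if_pos rfl, if_neg he] at hw
    have hfe : f e = cE G e f := by
      rw [cE_eq_neg_exD]
      linear_combination hw
    refine ⟨?_, hfe⟩
    intro v
    rw [exC_eq G e he]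
    by_cases hvw : v = G.tgt e
    · rw [if_pos hvw]
    · rw [if_neg hvw]
      by_cases hvu : v = G.src e
      · rw [if_pos hvu]
        have hu := h (G.src e)
        rw [exG_eq G e, if_neg (fun hh => he hh.symm), if_pos rfl] at hu
        linear_combination hu + hw
      · rw [if_neg hvu]
        have hv := h v
        rw [exG_eq G e, if_neg (fun hh => hvw hh.symm),
          if_neg (fun hh => hvu hh.symm)] at hv
        linear_combination hv
  · rintro ⟨hC, hfe⟩
    have h2 : f e = - exD G e f (G.tgt e) := by rw [hfe, cE_eq_neg_exD]
    intro v
    rw [exG_eq G e]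
    by_cases hvw : v = G.tgt e
    · subst hvw
      rw [if_pos rfl, if_neg he]
      linear_combination h2
    · rw [if_neg (fun hh => hvw hh.symm)]
      by_cases hvu : v = G.src e
      · subst hvu
        rw [if_pos rfl]
        have hCu := hC (G.src e)
        rw [exC_eq G e he, if_neg he, if_pos rfl] at hCu
        linear_combination hCu - h2
      · rw [if_neg (fun hh => hvu hh.symm)]
        have hCv := hC v
        rw [exC_eq G e he, if_neg hvw, if_neg hvu] at hCv
        linear_combination hCv

lemma card_supp {q : ℕ} (e : E) (g : {e' : E // e' ≠ e} → ZMod q) (c : ZMod q) :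
    (flowSupport (ext e g c)).card
      = (flowSupport g).card + if c ≠ 0 then 1 else 0 := by
  unfold flowSupport
  rw [Finset.card_eq_sum_ones, Finset.card_eq_sum_ones,
    sum_split e (fun x => ext e g c x ≠ 0) (fun _ => (1 : ℕ))]
  congr 1
  · rw [← sum_sub' e (fun x => ext e g c x ≠ 0) (fun _ => (1 : ℕ))]
    refine Finset.sum_congr ?_ (fun _ _ => rfl)
    refine Finset.filter_congr ?_
    intro e' _
    rw [ext_apply_ne e g c e'.1 e'.2]
  · simp only [ext_apply_self]

lemma cE_ext_congr {q : ℕ} (e : E) (g : {e' : E // e' ≠ e} → ZMod q) (c : ZMod q) :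
    cE G e (ext e g c) = cE G e (ext e g 0) :=
  cE_congr G e _ _ (fun x hx => by simp [ext, hx])

/-- The key identity: the flow partition function of `G` as a weighted sum over
flows of the contracted graph. -/
lemma key {q : ℕ} [NeZero q] (e : E) (he : G.src e ≠ G.tgt e) (x : ℝ) :
    G.ZflowR q x
      = ∑ g ∈ univ.filter (fun g : {e' : E // e' ≠ e} → ZMod q =>
          (G.contractEdge e).IsFlow q g),
          x ^ (flowSupport g).card * (if cE G e (ext e g 0) ≠ 0 then x else 1) := by
  unfold ZflowR
  refine Finset.sum_bij' (fun f _ => restr e f)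
    (fun g _ => ext e g (cE G e (ext e g 0))) ?_ ?_ ?_ ?_ ?_
  · intro f hf
    simp only [Finset.mem_filter, Finset.mem_univ, true_and] at hf ⊢
    exact ((flow_iff G e he f).1 hf).1
  · intro g hg
    simp only [Finset.mem_filter, Finset.mem_univ, true_and] at hg ⊢
    rw [flow_iff G e he]
    refine ⟨by rw [restr_ext]; exact hg, ?_⟩
    rw [ext_apply_self]
    exact (cE_ext_congr G e g _).symm
  · intro f hf
    simp only [Finset.mem_filter, Finset.mem_univ, true_and] at hf
    have hfe : f e = cE G e f := ((flow_iff G e he f).1 hf).2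
    have h1 : cE G e (ext e (restr e f) 0) = cE G e f :=
      cE_congr G e _ _ (fun x hx => by simp [ext, restr, hx])
    rw [h1, ← hfe, ext_restr]
  · intro g hg
    rw [restr_ext]
  · intro f hf
    simp only [Finset.mem_filter, Finset.mem_univ, true_and] at hf
    have hfe : f e = cE G e f := ((flow_iff G e he f).1 hf).2
    have h1 : cE G e (ext e (restr e f) 0) = cE G e f :=
      cE_congr G e _ _ (fun x hx => by simp [ext, restr, hx])
    have h2 : (flowSupport f).card
        = (flowSupport (restr e f)).card
          + if cE G e (ext e (restr e f) 0) ≠ 0 then 1 else 0 := by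
      conv_lhs => rw [← ext_restr e f]
      rw [card_supp]
      congr 1
      simp only [hfe, h1]
    rw [h2, pow_add]
    congr 1
    split_ifs <;> simp

lemma zero_isFlow {V' E' : Type} [Fintype V'] [Fintype E'] [DecidableEq V'] [DecidableEq E'] (H : Multigraph V' E')
    (q : ℕ) : H.IsFlow q (fun _ => 0) := by
  intro v; simp

lemma ZflowR_pos {V' E' : Type} [Fintype V'] [Fintype E'] [DecidableEq V'] [DecidableEq E']
    (H : Multigraph V' E') (q : ℕ) [NeZero q] (x : ℝ) (hx : 0 < x) :
    0 < H.ZflowR q x := by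
  unfold ZflowR
  apply Finset.sum_pos
  · intro f _; positivity
  · refine ⟨fun _ => 0, ?_⟩
    simp only [Finset.mem_filter, Finset.mem_univ, true_and]
    exact zero_isFlow H q

end ContractionAux

theorem contraction_ratio {V E : Type} [Fintype V] [Fintype E] [DecidableEq V] [DecidableEq E]
    (G : Multigraph V E) (q : ℕ) [NeZero q] (x : ℝ) (hx1 : 1/3 ≤ x) (hx2 : x < 1)
    (e : E) (he : G.src e ≠ G.tgt e) :
    1 ≤ (G.contractEdge e).ZflowR q x / G.ZflowR q x ∧
      (G.contractEdge e).ZflowR q x / G.ZflowR q x ≤ 1 / x ∧ 1 / x ≤ 3 := by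
  have hx0 : (0:ℝ) < x := lt_of_lt_of_le (by norm_num) hx1
  have hZcpos : 0 < (G.contractEdge e).ZflowR q x :=
    ContractionAux.ZflowR_pos _ q x hx0
  have hkey := ContractionAux.key G e he (q := q) x
  have hZc : (G.contractEdge e).ZflowR q x
      = ∑ g ∈ univ.filter (fun g : {e' : E // e' ≠ e} → ZMod q =>
          (G.contractEdge e).IsFlow q g),
          x ^ (Multigraph.flowSupport g).card := rfl
  have hupper : G.ZflowR q x ≤ (G.contractEdge e).ZflowR q x := by
    rw [hkey, hZc]
    apply Finset.sum_le_sum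
    intro g _
    have hwt : (if ContractionAux.cE G e (ContractionAux.ext e g 0) ≠ 0 then x else 1)
        ≤ 1 := by
      split_ifs
      · exact hx2.le
      · exact le_refl 1
    calc x ^ (Multigraph.flowSupport g).card
          * (if ContractionAux.cE G e (ContractionAux.ext e g 0) ≠ 0 then x else 1)
        ≤ x ^ (Multigraph.flowSupport g).card * 1 :=
          mul_le_mul_of_nonneg_left hwt (by positivity)
      _ = x ^ (Multigraph.flowSupport g).card := mul_one _
  have hlower : x * (G.contractEdge e).ZflowR q x ≤ G.ZflowR q x := by
    rw [hkey, hZc, Finset.mul_sum]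
    apply Finset.sum_le_sum
    intro g _
    rw [mul_comm x (x ^ (Multigraph.flowSupport g).card)]
    apply mul_le_mul_of_nonneg_left ?_ (by positivity)
    split_ifs
    · exact le_refl x
    · exact hx2.le
  have hZpos : 0 < G.ZflowR q x := lt_of_lt_of_le (by positivity) hlower
  refine ⟨(one_le_div hZpos).2 hupper, ?_, ?_⟩
  · rw [div_le_div_iff₀ hZpos hx0, one_mul, mul_comm]
    exact hlower
  · rw [div_le_iff₀ hx0]
    linarith
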